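/- A direct product ∏ᵢ Rᵢ of commutative rings is locally stable if and only if each Rᵢ is locally stable. -/

import Mathlib

/-- A commutative ring has stable range 1. -/
def HasStableRange1 (R : Type*) [CommRing R] : Prop :=
  ∀ a b : R, Ideal.span {a} ⊔ Ideal.span {b} = ⊤ → ∃ y : R, IsUnit (a + b * y)

/-- An element `a` is stable if `R/aR` has stable range 1. -/
def IsStableElem {R : Type*} [CommRing R] (a : R) : Prop :=
  HasStableRange1 (R ⧸ Ideal.span {a})

/-- A commutative ring is locally stable. -/
def LocallyStable (R : Type*) [CommRing R] : Prop :=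
  ∀ a b : R, Ideal.span {a} ⊔ Ideal.span {b} = ⊤ →
    ∃ y : R, HasStableRange1 (R ⧸ Ideal.span {a + b * y})

/-- A clean ring: every element is the sum of an idempotent and a unit. -/
def IsCleanRing (R : Type*) [CommRing R] : Prop :=
  ∀ a : R, ∃ e u : R, IsIdempotentElem e ∧ IsUnit u ∧ a = e + u

/-- A ring has neat range 1. -/
def NeatRange1 (R : Type*) [CommRing R] : Prop :=
  ∀ a b : R, Ideal.span {a} ⊔ Ideal.span {b} = ⊤ →
    ∃ y : R, IsCleanRing (R ⧸ Ideal.span {a + b * y})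

/-- A ring has almost stable range 1: every proper homomorphic image has stable range 1. -/
def AlmostStableRange1 (R : Type*) [CommRing R] : Prop :=
  ∀ I : Ideal R, I ≠ ⊥ → HasStableRange1 (R ⧸ I)

/-- An elementary divisor ring: every rectangular matrix admits diagonal reduction. -/
def ElementaryDivisorRing (R : Type*) [CommRing R] : Prop :=
  ∀ (m n : ℕ) (A : Matrix (Fin m) (Fin n) R),
    ∃ (P : Matrix (Fin m) (Fin m) R) (Q : Matrix (Fin n) (Fin n) R),
      IsUnit P ∧ IsUnit Q ∧
      (∀ (i : Fin m) (j : Fin n), (i : ℕ) ≠ (j : ℕ) → (P * A * Q) i j = 0) ∧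
      (∀ (i i' : Fin m) (j j' : Fin n), (i : ℕ) = (j : ℕ) → (i' : ℕ) = (j' : ℕ) →
        (i' : ℕ) = (i : ℕ) + 1 → (P * A * Q) i j ∣ (P * A * Q) i' j')

/-- A ring is strongly completable. -/
def StronglyCompletable (R : Type*) [CommRing R] : Prop :=
  ∀ (n : ℕ) (hn : 0 < n) (a : Fin n → R) (d : R),
    (⨆ i, Ideal.span {a i}) = Ideal.span {d} →
    ∃ A : Matrix (Fin n) (Fin n) R, (∀ j, A ⟨0, hn⟩ j = a j) ∧ A.det = d

section Aux
variable {S : Type*} [CommRing S]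

/-- Elementwise reformulation of `HasStableRange1 (S ⧸ span {c})`. -/
def StableMod (c : S) : Prop :=
  ∀ a b : S, (∃ x y z, a * x + b * y + c * z = 1) →
    ∃ y u w, (a + b * y) * u + c * w = 1

lemma spanPair_top_iff (a b : S) :
    Ideal.span {a} ⊔ Ideal.span {b} = ⊤ ↔ ∃ x y, a * x + b * y = 1 := by
  rw [← Ideal.span_insert, Ideal.eq_top_iff_one, Ideal.mem_span_pair]
  constructor
  · rintro ⟨u, v, h⟩; exact ⟨u, v, by linear_combination h⟩
  · rintro ⟨x, y, h⟩; exact ⟨x, y, by linear_combination h⟩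

lemma hasStableRange1_quot_iff (c : S) :
    HasStableRange1 (S ⧸ Ideal.span {c}) ↔ StableMod c := by
  set q := Ideal.Quotient.mk (Ideal.span {c}) with hq
  have hc0 : q c = 0 := Ideal.Quotient.eq_zero_iff_mem.2 (Ideal.mem_span_singleton_self c)
  constructor
  · intro h a b ⟨x, y, z, hxyz⟩
    obtain ⟨y', hy'⟩ := h (q a) (q b) (by
      rw [spanPair_top_iff]
      refine ⟨q x, q y, ?_⟩
      have : q (a * x + b * y + c * z) = q 1 := by rw [hxyz]
      simpa [map_add, map_mul, hc0] using this)
    obtain ⟨y₀, rfl⟩ := Ideal.Quotient.mk_surjective y'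
    obtain ⟨u', hu'⟩ := isUnit_iff_exists_inv.1 hy'
    obtain ⟨u₀, rfl⟩ := Ideal.Quotient.mk_surjective u'
    have : q ((a + b * y₀) * u₀ - 1) = 0 := by
      push_cast [map_sub, map_mul, map_add, map_one]
      rw [sub_eq_zero]
      simpa using hu'
    obtain ⟨w, hw⟩ := Ideal.mem_span_singleton'.1 (Ideal.Quotient.eq_zero_iff_mem.1 this)
    exact ⟨y₀, u₀, -w, by linear_combination -hw⟩
  · intro h a' b' htop
    obtain ⟨a, rfl⟩ := Ideal.Quotient.mk_surjective a'
    obtain ⟨b, rfl⟩ := Ideal.Quotient.mk_surjective b'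
    obtain ⟨x', y', hxy⟩ := (spanPair_top_iff _ _).1 htop
    obtain ⟨x, rfl⟩ := Ideal.Quotient.mk_surjective x'
    obtain ⟨y, rfl⟩ := Ideal.Quotient.mk_surjective y'
    have : q (a * x + b * y - 1) = 0 := by
      push_cast [map_sub, map_mul, map_add, map_one]
      rw [sub_eq_zero]
      simpa using hxy
    obtain ⟨z, hz⟩ := Ideal.mem_span_singleton'.1 (Ideal.Quotient.eq_zero_iff_mem.1 this)
    obtain ⟨y₀, u, w, huw⟩ := h a b ⟨x, y, -z, by linear_combination -hz⟩
    refine ⟨q y₀, IsUnit.of_mul_eq_one (q u) ?_⟩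
    have : q ((a + b * y₀) * u + c * w) = q 1 := by rw [huw]
    simpa [map_add, map_mul, hc0] using this

end Aux

section Pi
variable {ι : Type*} {R : ι → Type*} [∀ i, CommRing (R i)]

lemma stableMod_component {c : ∀ i, R i} (h : StableMod c) (i : ι) :
    StableMod (c i) := by
  intro a b ⟨x, y, z, hxyz⟩
  classical
  obtain ⟨Y, U, W, hUW⟩ := h (Function.update 1 i a) (Function.update 0 i b)
    ⟨Function.update 1 i x, Function.update 0 i y, Function.update 0 i z, by
      funext j
      by_cases hj : j = i
      · subst hj; simpa using hxyz
      · simp [Function.update_of_ne hj]⟩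
  have := congrFun hUW i
  exact ⟨Y i, U i, W i, by simpa using this⟩

lemma stableMod_pi {c : ∀ i, R i} (h : ∀ i, StableMod (c i)) :
    StableMod c := by
  intro a b ⟨x, y, z, hxyz⟩
  choose Y U W hUW using fun i => h i (a i) (b i)
    ⟨x i, y i, z i, congrFun hxyz i⟩
  exact ⟨Y, U, W, funext fun i => hUW i⟩

end Pi

theorem stmt5 {ι : Type*} (R : ι → Type*) [∀ i, CommRing (R i)] :
    LocallyStable (∀ i, R i) ↔ ∀ i, LocallyStable (R i) := by
  classical
  constructor
  · intro h i a b hab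
    obtain ⟨x, y, hxy⟩ := (spanPair_top_iff a b).1 hab
    obtain ⟨Y, hY⟩ := h (Function.update 1 i a) (Function.update 0 i b) (by
      rw [spanPair_top_iff]
      refine ⟨Function.update 1 i x, Function.update 0 i y, ?_⟩
      funext j
      by_cases hj : j = i
      · subst hj; simpa using hxy
      · simp [Function.update_of_ne hj])
    refine ⟨Y i, (hasStableRange1_quot_iff _).2 ?_⟩
    have := stableMod_component ((hasStableRange1_quot_iff _).1 hY) i
    simpa using this
  · intro h a b hab
    obtain ⟨x, y, hxy⟩ := (spanPair_top_iff a b).1 hab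
    have : ∀ i, ∃ yi, StableMod (a i + b i * yi) := by
      intro i
      obtain ⟨yi, hyi⟩ := h i (a i) (b i) (by
        rw [spanPair_top_iff]; exact ⟨x i, y i, congrFun hxy i⟩)
      exact ⟨yi, (hasStableRange1_quot_iff _).1 hyi⟩
    choose Y hY using this
    exact ⟨Y, (hasStableRange1_quot_iff _).2 (stableMod_pi hY)⟩
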